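/- Let (X_n) be a stochastic process on a probability space (Ω, F, P) and fix λ, ε > 0. Suppose M > 0 satisfies P(|X_n| ≥ M) < λ/2 for all n ∈ ℕ, and L > 0 satisfies E[Cr_∞([α,β], X)] ≤ L for all [α,β] ∈ P(M(1 + 2/p), p+2), where p := ⌈8M/ε⌉. Then for all naturals a_0 < b_0 ≤ a_1 < b_1 ≤ … there exists n ≤ 2(p+2)L/λ such that P(∃ k, l ∈ [a_n, b_n] with |X_k − X_l| ≥ ε) < λ. -/

import Mathlib

open MeasureTheory ENNReal

/-- There exist `k` many `[α,β]`-crossings in the sequence `x`. -/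
def HasCross (α β : ℝ) (x : ℕ → ℝ) (k : ℕ) : Prop :=
  ∃ i j : ℕ → ℕ, (∀ l < k, i l < j l) ∧ (∀ l, l + 1 < k → j l ≤ i (l + 1)) ∧
    ∀ l < k, (x (i l) ≤ α ∧ β ≤ x (j l)) ∨ (β ≤ x (i l) ∧ x (j l) ≤ α)

/-- `Cr_∞([α,β], x)`, the total number of `[α,β]`-crossings of `x`, as a value in `ℝ≥0∞`. -/
noncomputable def crossInf (α β : ℝ) (x : ℕ → ℝ) : ℝ≥0∞ :=
  ⨆ k ∈ {k : ℕ | HasCross α β x k}, (k : ℝ≥0∞)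

lemma aux_hasCross {α β : ℝ} {x : ℕ → ℝ} {a b : ℕ → ℕ}
    (hab : ∀ n, a n < b n) (hba : ∀ n, b n ≤ a (n + 1))
    (S : Finset ℕ)
    (hS : ∀ n ∈ S, ∃ u v : ℕ, a n ≤ u ∧ v ≤ b n ∧ u < v ∧
      ((x u ≤ α ∧ β ≤ x v) ∨ (β ≤ x u ∧ x v ≤ α))) :
    HasCross α β x S.card := by
  classical
  have hmono : StrictMono a := strictMono_nat_of_lt_succ fun n => lt_of_lt_of_le (hab n) (hba n)
  have hblock : ∀ m n : ℕ, m < n → b m ≤ a n := fun m n h =>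
    le_trans (hba m) (hmono.monotone h)
  have hS' : ∀ n : ℕ, ∃ u v : ℕ, n ∈ S → (a n ≤ u ∧ v ≤ b n ∧ u < v ∧
      ((x u ≤ α ∧ β ≤ x v) ∨ (β ≤ x u ∧ x v ≤ α))) := by
    intro n
    by_cases h : n ∈ S
    · obtain ⟨u, v, hc⟩ := hS n h
      exact ⟨u, v, fun _ => hc⟩
    · exact ⟨0, 0, fun h' => absurd h' h⟩
  choose u v hc using hS'
  set k := S.card with hk
  let e := S.orderIsoOfFin rfl
  refine ⟨fun l => if h : l < k then u ((e ⟨l, h⟩ : S) : ℕ) else 0,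
          fun l => if h : l < k then v ((e ⟨l, h⟩ : S) : ℕ) else 0, ?_, ?_, ?_⟩
  · intro l hl
    simp only [dif_pos hl]
    exact ((hc _ (e ⟨l, hl⟩).2).2.2).1
  · intro l hl
    have hl' : l < k := by omega
    simp only [dif_pos hl, dif_pos hl']
    have hlt : ((e ⟨l, hl'⟩ : S) : ℕ) < ((e ⟨l + 1, hl⟩ : S) : ℕ) := by
      have : (⟨l, hl'⟩ : Fin k) < ⟨l + 1, hl⟩ := by simp [Fin.mk_lt_mk]
      exact_mod_cast e.strictMono this
    calc v ((e ⟨l, hl'⟩ : S) : ℕ) ≤ b ((e ⟨l, hl'⟩ : S) : ℕ) :=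
          ((hc _ (e ⟨l, hl'⟩).2).2.1)
      _ ≤ a ((e ⟨l + 1, hl⟩ : S) : ℕ) := hblock _ _ hlt
      _ ≤ u ((e ⟨l + 1, hl⟩ : S) : ℕ) := (hc _ (e ⟨l + 1, hl⟩).2).1
  · intro l hl
    simp only [dif_pos hl]
    exact (hc _ (e ⟨l, hl⟩).2).2.2.2

/-- Fix `λ, ε > 0`. If `M > 0` satisfies `P(|X n| ≥ M) < λ/2` for all `n`, and `L > 0` bounds
`E[Cr_∞([α,β],X)]` for every subinterval `[α,β]` of the partition `𝒫(M(1+2/p), p+2)` of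
`[-M(1+2/p), M(1+2/p)]`, with `p = ⌈8M/ε⌉`, then for every chain `a₀ < b₀ ≤ a₁ < b₁ ≤ …`
there is `n ≤ 2(p+2)L/λ` with `P(∃ k, l ∈ [a n, b n], |X k - X l| ≥ ε) < λ`. -/
theorem stmt13 {Ω : Type} [MeasurableSpace Ω] (μ : Measure Ω) [IsProbabilityMeasure μ]
    (X : ℕ → Ω → ℝ) (hX : ∀ n, Measurable (X n))
    (lam eps : ℝ) (hlam : 0 < lam) (heps : 0 < eps)
    (M : ℝ) (hM : 0 < M)
    (htight : ∀ n : ℕ, μ {ω | M ≤ |X n ω|} < ENNReal.ofReal (lam / 2))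
    (p : ℕ) (hp : p = ⌈8 * M / eps⌉₊)
    (M' : ℝ) (hM' : M' = M * (1 + 2 / (p : ℝ)))
    (L : ℝ) (hL : 0 < L)
    (hcross : ∀ i : ℕ, i < p + 2 →
      ∫⁻ ω, crossInf (-M' + 2 * M' * (i : ℝ) / ((p : ℝ) + 2))
          (-M' + 2 * M' * ((i : ℝ) + 1) / ((p : ℝ) + 2)) (fun n => X n ω) ∂μ
        ≤ ENNReal.ofReal L)
    (a b : ℕ → ℕ) (hab : ∀ n, a n < b n) (hba : ∀ n, b n ≤ a (n + 1)) :
    ∃ n : ℕ, (n : ℝ) ≤ 2 * ((p : ℝ) + 2) * L / lam ∧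
      μ {ω | ∃ k ∈ Set.Icc (a n) (b n), ∃ l ∈ Set.Icc (a n) (b n), eps ≤ |X k ω - X l ω|}
        < ENNReal.ofReal lam := by
  classical
  -- basic numerics
  have hp0 : 0 < p := by
    rw [hp]; exact Nat.ceil_pos.mpr (by positivity)
  have hpRpos : (0:ℝ) < (p:ℝ) := by exact_mod_cast hp0
  have hpR : 8 * M / eps ≤ (p : ℝ) := by rw [hp]; exact Nat.le_ceil _
  set w : ℝ := 2 * M / (p : ℝ) with hw
  have hwpos : 0 < w := by rw [hw]; positivity
  have hM'w : M' = M + w := by rw [hM', hw]; field_simp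
  have hM'pos : 0 < M' := by rw [hM'w]; linarith
  have hp2ne : ((p:ℝ) + 2) ≠ 0 := by positivity
  have h2M' : 2 * M' = ((p:ℝ) + 2) * w := by
    rw [hM'w, hw]; field_simp
  have h4w : 4 * w ≤ eps := by
    have h8 : 8 * M ≤ eps * (p:ℝ) := by
      rw [div_le_iff₀ heps] at hpR; linarith
    rw [hw, show (4:ℝ) * (2 * M / (p:ℝ)) = 8 * M / (p:ℝ) by ring, div_le_iff₀ hpRpos]
    linarith
  set aI : ℕ → ℝ := fun i => -M' + 2 * M' * (i:ℝ) / ((p:ℝ) + 2) with haI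
  have haIeq : ∀ i : ℕ, aI i = -M' + (i:ℝ) * w := by
    intro i
    show -M' + 2 * M' * (i:ℝ) / ((p:ℝ) + 2) = -M' + (i:ℝ) * w
    rw [h2M']
    field_simp
  have haIsucc : ∀ i : ℕ, aI (i + 1) = -M' + 2 * M' * ((i:ℝ) + 1) / ((p:ℝ) + 2) := by
    intro i
    show -M' + 2 * M' * ((i + 1 : ℕ):ℝ) / ((p:ℝ) + 2) = -M' + 2 * M' * ((i:ℝ) + 1) / ((p:ℝ) + 2)
    push_cast
    ring
  have hpw : (p:ℝ) * w = 2 * M := by rw [hw]; field_simp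
  -- the crossing events per interval/block
  set C : ℕ → ℕ → Set Ω := fun i n => {ω | ∃ u ∈ Set.Icc (a n) (b n),
    ∃ v ∈ Set.Icc (a n) (b n), u < v ∧
      ((X u ω ≤ aI i ∧ aI (i+1) ≤ X v ω) ∨ (aI (i+1) ≤ X u ω ∧ X v ω ≤ aI i))} with hC
  have hCmeas : ∀ i n, MeasurableSet (C i n) := by
    intro i n
    have hrw : C i n = ⋃ (u : ℕ) (v : ℕ)
        (_ : u ∈ Set.Icc (a n) (b n) ∧ v ∈ Set.Icc (a n) (b n) ∧ u < v),
        (({ω | X u ω ≤ aI i} ∩ {ω | aI (i+1) ≤ X v ω}) ∪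
         ({ω | aI (i+1) ≤ X u ω} ∩ {ω | X v ω ≤ aI i})) := by
      ext ω
      simp only [hC, Set.mem_setOf_eq, Set.mem_iUnion, Set.mem_union, Set.mem_inter_iff]
      constructor
      · rintro ⟨u, hu, v, hv, huv, hd⟩
        exact ⟨u, v, ⟨hu, hv, huv⟩, hd⟩
      · rintro ⟨u, v, ⟨hu, hv, huv⟩, hd⟩
        exact ⟨u, hu, v, hv, huv, hd⟩
    rw [hrw]
    refine MeasurableSet.iUnion fun u => MeasurableSet.iUnion fun v =>
      MeasurableSet.iUnion fun _ => ?_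
    exact (((measurableSet_le (hX u) measurable_const).inter
        (measurableSet_le measurable_const (hX v))).union
      ((measurableSet_le measurable_const (hX u)).inter
        (measurableSet_le (hX v) measurable_const)))
  -- geometry: a big oscillation in a block with X (a n) small forces a crossing
  have hgeom : ∀ n : ℕ, ∀ ω : Ω, |X (a n) ω| < M →
      (∃ k ∈ Set.Icc (a n) (b n), ∃ l ∈ Set.Icc (a n) (b n), eps ≤ |X k ω - X l ω|) →
      ∃ i, i < p + 2 ∧ ω ∈ C i n := by
    intro n ω h0 ⟨k, hk, l, hl, hkl⟩
    have h0l : -M < X (a n) ω := (abs_lt.mp h0).1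
    have h0r : X (a n) ω < M := (abs_lt.mp h0).2
    have key : ∀ k l : ℕ, k ∈ Set.Icc (a n) (b n) → l ∈ Set.Icc (a n) (b n) →
        X l ω + eps ≤ X k ω → ∃ i, i < p + 2 ∧ ω ∈ C i n := by
      intro k l hk hl hyx
      have hne : k ≠ l := by
        intro h; rw [h] at hyx; linarith
      set x := X k ω with hx
      set y := X l ω with hy
      have mkmem : ∀ i : ℕ, y ≤ aI i → aI (i+1) ≤ x → ω ∈ C i n := by
        intro i h1 h2
        rcases lt_or_ge k l with h | h
        · exact ⟨k, hk, l, hl, h, Or.inr ⟨h2, h1⟩⟩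
        · have h' : l < k := lt_of_le_of_ne h (Ne.symm hne)
          exact ⟨l, hl, k, hk, h', Or.inl ⟨h1, h2⟩⟩
      rcases le_or_gt M' x with hxM | hxM
      · -- top interval, index p+1
        refine ⟨p + 1, by omega, ?_⟩
        have hαp1 : aI (p+1) = M := by
          rw [haIeq]; push_cast; rw [add_mul, one_mul, hpw, hM'w]; ring
        have hαp2 : aI (p+2) = M' := by
          rw [haIeq]; push_cast; rw [add_mul, hpw, hM'w]; ring
        have hank : a n < k := by
          rcases eq_or_lt_of_le hk.1 with h | h
          · exfalso; rw [← h] at hx; rw [← hx] at h0r; linarith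
          · exact h
        exact ⟨a n, ⟨le_refl _, (hab n).le⟩, k, hk, hank,
          Or.inl ⟨by rw [hαp1]; linarith, by
            have : aI (p + 1 + 1) = M' := by rw [show p+1+1 = p+2 from rfl, hαp2]
            rw [this]; linarith⟩⟩
      rcases le_or_gt y (-M') with hyM | hyM
      · -- bottom interval, index 0
        refine ⟨0, by omega, ?_⟩
        have hα0 : aI 0 = -M' := by rw [haIeq]; push_cast; ring
        have hα1 : aI 1 = -M := by
          rw [haIeq]; push_cast; rw [one_mul, hM'w]; ring
        have hanl : a n < l := by
          rcases eq_or_lt_of_le hl.1 with h | h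
          · exfalso; rw [← h] at hy; rw [← hy] at h0l; linarith
          · exact h
        exact ⟨a n, ⟨le_refl _, (hab n).le⟩, l, hl, hanl,
          Or.inr ⟨by rw [show (0:ℕ)+1 = 1 from rfl, hα1]; linarith,
            by rw [hα0]; linarith⟩⟩
      · -- middle interval
        set i := ⌈(y + M') / w⌉₊ with hi
        have hq : 0 < (y + M') / w := div_pos (by linarith) hwpos
        have hile : (y + M') / w ≤ (i : ℝ) := Nat.le_ceil _
        have hilt : (i : ℝ) < (y + M') / w + 1 := Nat.ceil_lt_add_one hq.le
        have hiw1 : y + M' ≤ (i:ℝ) * w := by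
          rw [div_le_iff₀ hwpos] at hile; linarith
        have hiw2 : (i:ℝ) * w < y + M' + w := by
          have h5 := mul_lt_mul_of_pos_right hilt hwpos
          rw [add_mul, one_mul, div_mul_cancel₀ _ hwpos.ne'] at h5
          linarith
        have hy_le : y ≤ aI i := by rw [haIeq]; linarith
        have hb_le : aI (i+1) ≤ x := by
          rw [haIeq]; push_cast; nlinarith [hiw2, hyx, h4w, hwpos]
        have hip : i < p + 2 := by
          have hi_lt : (i:ℝ) * w < ((p:ℝ) + 2) * w := by
            have : (i:ℝ) * w < 2 * M' := by linarith
            linarith [h2M']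
          have : (i:ℝ) < (p:ℝ) + 2 := lt_of_mul_lt_mul_right hi_lt hwpos.le
          exact_mod_cast this
        exact ⟨i, hip, mkmem i hy_le hb_le⟩
    rcases le_abs.mp hkl with h | h
    · exact key k l hk hl (by linarith)
    · exact key l k hl hk (by linarith)
  -- main counting argument
  by_contra hcon
  push_neg at hcon
  set B : ℝ := 2 * ((p:ℝ) + 2) * L / lam with hB
  have hBpos : 0 ≤ B := by rw [hB]; positivity
  set N := ⌊B⌋₊ with hN
  have hbad : ∀ n ≤ N, ENNReal.ofReal lam ≤
      μ {ω | ∃ k ∈ Set.Icc (a n) (b n), ∃ l ∈ Set.Icc (a n) (b n), eps ≤ |X k ω - X l ω|} := by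
    intro n hn
    refine hcon n ?_
    calc (n : ℝ) ≤ (N : ℝ) := by exact_mod_cast hn
      _ ≤ B := Nat.floor_le hBpos
  have hstep : ∀ n ≤ N, ENNReal.ofReal (lam / 2) < ∑ i ∈ Finset.range (p + 2), μ (C i n) := by
    intro n hn
    have h1 : {ω | ∃ k ∈ Set.Icc (a n) (b n), ∃ l ∈ Set.Icc (a n) (b n),
        eps ≤ |X k ω - X l ω|} ⊆ {ω | M ≤ |X (a n) ω|} ∪ ⋃ i ∈ Finset.range (p + 2), C i n := by
      intro ω hω
      by_cases h0 : M ≤ |X (a n) ω|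
      · exact Or.inl h0
      · obtain ⟨i, hi, hCm⟩ := hgeom n ω (lt_of_not_ge h0) hω
        exact Or.inr (Set.mem_biUnion (Finset.mem_range.mpr hi) hCm)
    have hsum_ne : (∑ i ∈ Finset.range (p + 2), μ (C i n)) ≠ ⊤ :=
      (ENNReal.sum_lt_top.mpr fun i _ => measure_lt_top μ _).ne
    have h2 : ENNReal.ofReal lam ≤ μ {ω | M ≤ |X (a n) ω|} +
        ∑ i ∈ Finset.range (p + 2), μ (C i n) :=
      le_trans (hbad n hn) (le_trans (measure_mono h1)
        (le_trans (measure_union_le _ _)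
          (add_le_add_right (measure_biUnion_finset_le _ _) _)))
    have h3 : ENNReal.ofReal (lam / 2) + ENNReal.ofReal (lam / 2) <
        ENNReal.ofReal (lam / 2) + ∑ i ∈ Finset.range (p + 2), μ (C i n) := by
      calc ENNReal.ofReal (lam / 2) + ENNReal.ofReal (lam / 2)
          = ENNReal.ofReal lam := by
            rw [← ENNReal.ofReal_add (by linarith) (by linarith)]; norm_num
        _ ≤ μ {ω | M ≤ |X (a n) ω|} + ∑ i ∈ Finset.range (p + 2), μ (C i n) := h2
        _ < ENNReal.ofReal (lam / 2) + ∑ i ∈ Finset.range (p + 2), μ (C i n) :=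
            ENNReal.add_lt_add_right hsum_ne (htight (a n))
    exact (ENNReal.add_lt_add_iff_left ENNReal.ofReal_ne_top).mp h3
  have hcrossbound : ∀ i, i < p + 2 →
      ∑ n ∈ Finset.range (N + 1), μ (C i n) ≤ ENNReal.ofReal L := by
    intro i hi
    have hpt : ∀ ω, ∑ n ∈ Finset.range (N + 1), (C i n).indicator (fun _ => (1:ℝ≥0∞)) ω ≤
        crossInf (aI i) (aI (i + 1)) (fun m => X m ω) := by
      intro ω
      set S := (Finset.range (N + 1)).filter (fun n => ω ∈ C i n) with hS
      have hsum : ∑ n ∈ Finset.range (N + 1), (C i n).indicator (fun _ => (1:ℝ≥0∞)) ω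
          = (S.card : ℝ≥0∞) := by
        rw [hS, Finset.card_filter]
        push_cast
        refine Finset.sum_congr rfl fun n _ => ?_
        by_cases h : ω ∈ C i n <;> simp [h, Set.indicator]
      rw [hsum]
      have hHC : HasCross (aI i) (aI (i + 1)) (fun m => X m ω) S.card := by
        apply aux_hasCross hab hba
        intro n hn
        obtain ⟨u, hu, v, hv, huv, hcond⟩ := (Finset.mem_filter.mp hn).2
        exact ⟨u, v, hu.1, hv.2, huv, hcond⟩
      exact le_biSup _ hHC
    calc ∑ n ∈ Finset.range (N + 1), μ (C i n)
        = ∫⁻ ω, ∑ n ∈ Finset.range (N + 1), (C i n).indicator (fun _ => (1:ℝ≥0∞)) ω ∂μ := by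
          rw [lintegral_finset_sum _ (fun n _ => measurable_const.indicator (hCmeas i n))]
          exact Finset.sum_congr rfl fun n _ => (lintegral_indicator_one (hCmeas i n)).symm
      _ ≤ ∫⁻ ω, crossInf (aI i) (aI (i + 1)) (fun m => X m ω) ∂μ := lintegral_mono hpt
      _ ≤ ENNReal.ofReal L := by
          have h := hcross i hi
          have e1 : aI i = -M' + 2 * M' * (i : ℝ) / ((p : ℝ) + 2) := by simp only [haI]
          rw [e1, haIsucc i]
          exact h
  have hfinal : ENNReal.ofReal (((N:ℝ) + 1) * (lam / 2)) ≤
      ENNReal.ofReal (((p:ℝ) + 2) * L) := by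
    have h1 : ENNReal.ofReal (((N:ℝ) + 1) * (lam / 2)) =
        (N + 1 : ℝ≥0∞) * ENNReal.ofReal (lam / 2) := by
      rw [ENNReal.ofReal_mul (by positivity)]
      congr 1
      rw [ENNReal.ofReal_add (Nat.cast_nonneg N) zero_le_one, ENNReal.ofReal_natCast,
        ENNReal.ofReal_one]
    have h2 : ENNReal.ofReal (((p:ℝ) + 2) * L) = (p + 2 : ℝ≥0∞) * ENNReal.ofReal L := by
      rw [ENNReal.ofReal_mul (by positivity)]
      congr 1
      rw [ENNReal.ofReal_add (by positivity) (by norm_num), ENNReal.ofReal_natCast]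
      norm_num
    rw [h1, h2]
    calc (N + 1 : ℝ≥0∞) * ENNReal.ofReal (lam / 2)
        = ∑ _n ∈ Finset.range (N + 1), ENNReal.ofReal (lam / 2) := by
          rw [Finset.sum_const, Finset.card_range, nsmul_eq_mul]; push_cast; ring
      _ ≤ ∑ n ∈ Finset.range (N + 1), ∑ i ∈ Finset.range (p + 2), μ (C i n) :=
          Finset.sum_le_sum fun n hn => (hstep n (Nat.lt_succ_iff.mp (Finset.mem_range.mp hn))).le
      _ = ∑ i ∈ Finset.range (p + 2), ∑ n ∈ Finset.range (N + 1), μ (C i n) :=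
          Finset.sum_comm
      _ ≤ ∑ _i ∈ Finset.range (p + 2), ENNReal.ofReal L :=
          Finset.sum_le_sum fun i hi => hcrossbound i (Finset.mem_range.mp hi)
      _ = (p + 2 : ℝ≥0∞) * ENNReal.ofReal L := by
          rw [Finset.sum_const, Finset.card_range, nsmul_eq_mul]; push_cast; ring
  have hreal : ((N:ℝ) + 1) * (lam / 2) ≤ ((p:ℝ) + 2) * L :=
    (ENNReal.ofReal_le_ofReal_iff (by positivity)).mp hfinal
  have hNlt : B < (N:ℝ) + 1 := Nat.lt_floor_add_one B
  rw [hB, div_lt_iff₀ hlam] at hNlt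
  nlinarith
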